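/- Gradient increment bound: Let f^i be L^i-Lipschitz-gradient functions, L = max_i L^i, and define q_k = x_k − x* and z_k = ∇f(x_k) − ∇f(x_{k−1}) (with z_0 = 0), where x* is a fixed matrix. Then for any λ ∈ (0,1) and any K ≥ 0, ‖z‖^{λ,K} ≤ L(1 + 1/λ)‖q‖^{λ,K}, where ‖s‖^{λ,K} = max_{k=0,…,K} λ^{-k}‖s_k‖_F. -/

import Mathlib

open scoped BigOperators

/-- Truncated weighted norm of a real sequence: `max_{0≤k≤K} λ^{-k} s_k`. -/
noncomputable def tnorm (s : ℕ → ℝ) (l : ℝ) (K : ℕ) : ℝ :=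
  (Finset.range (K + 1)).sup' Finset.nonempty_range_add_one (fun k => s k / l ^ k)

/-- gradient increment bound `‖z‖^{λ,K} ≤ L (1 + 1/λ) ‖q‖^{λ,K}`,
where `q_k = x_k − x*` and `z_k = ∇f(x_k) − ∇f(x_{k−1})` (rowwise gradients,
Frobenius norms). -/
theorem gradient_increment_bound {n p : ℕ}
    (g : Fin n → EuclideanSpace ℝ (Fin p) → EuclideanSpace ℝ (Fin p))
    (Li : Fin n → ℝ) (L : ℝ)
    (hLi : ∀ i, 0 ≤ Li i) (hL : ∀ i, Li i ≤ L)
    (hlip : ∀ i x y, ‖g i x - g i y‖ ≤ Li i * ‖x - y‖)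
    (x : ℕ → Fin n → EuclideanSpace ℝ (Fin p))
    (xstar : Fin n → EuclideanSpace ℝ (Fin p))
    (q z : ℕ → ℝ)
    (hq : ∀ k, q k = Real.sqrt (∑ i, ‖x k i - xstar i‖ ^ 2))
    (hz0 : z 0 = 0)
    (hz : ∀ k, z (k + 1) = Real.sqrt (∑ i, ‖g i (x (k + 1) i) - g i (x k i)‖ ^ 2))
    (l : ℝ) (hl0 : 0 < l) (hl1 : l < 1) (K : ℕ) :
    tnorm z l K ≤ L * (1 + 1 / l) * tnorm q l K := by
  have hq0 : ∀ k, 0 ≤ q k := fun k => (hq k) ▸ Real.sqrt_nonneg _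
  rcases Nat.eq_zero_or_pos n with hn | hn
  · subst hn
    have hz' : ∀ k, z k = 0 := by
      intro k
      cases k with
      | zero => exact hz0
      | succ k => rw [hz]; simp
    have hq' : ∀ k, q k = 0 := by intro k; rw [hq]; simp
    have h2 : tnorm q l K = 0 := by
      apply le_antisymm
      · apply Finset.sup'_le; intro k _; rw [hq' k]; simp
      · have h0 : q 0 / l ^ 0 ≤ tnorm q l K :=
          Finset.le_sup' (fun k => q k / l ^ k) (Finset.mem_range.mpr (Nat.succ_pos K))
        rw [hq' 0] at h0
        simpa using h0
    rw [h2, mul_zero]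
    apply Finset.sup'_le; intro k _; rw [hz' k]; simp
  · obtain ⟨i0⟩ : Nonempty (Fin n) := ⟨⟨0, hn⟩⟩
    have hL0 : 0 ≤ L := (hLi i0).trans (hL i0)
    -- norm identity
    have hnorm : ∀ a b : Fin n → EuclideanSpace ℝ (Fin p),
        Real.sqrt (∑ i, ‖a i - b i‖ ^ 2)
          = ‖(WithLp.equiv 2 (∀ _ : Fin n, EuclideanSpace ℝ (Fin p))).symm a
              - (WithLp.equiv 2 (∀ _ : Fin n, EuclideanSpace ℝ (Fin p))).symm b‖ := by
      intro a b
      rw [PiLp.norm_eq_of_L2]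
      rfl
    have hkey : ∀ k, z (k + 1) ≤ L * (q (k + 1) + q k) := by
      intro k
      have step1 : z (k + 1) ≤ L * Real.sqrt (∑ i, ‖x (k + 1) i - x k i‖ ^ 2) := by
        rw [hz k]
        have hsum : (∑ i, ‖g i (x (k + 1) i) - g i (x k i)‖ ^ 2)
            ≤ ∑ i, L ^ 2 * ‖x (k + 1) i - x k i‖ ^ 2 := by
          apply Finset.sum_le_sum
          intro i _
          have h1 : ‖g i (x (k + 1) i) - g i (x k i)‖ ≤ L * ‖x (k + 1) i - x k i‖ :=
            (hlip i _ _).trans (mul_le_mul_of_nonneg_right (hL i) (norm_nonneg _))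
          calc ‖g i (x (k + 1) i) - g i (x k i)‖ ^ 2
              ≤ (L * ‖x (k + 1) i - x k i‖) ^ 2 :=
                pow_le_pow_left₀ (norm_nonneg _) h1 2
            _ = L ^ 2 * ‖x (k + 1) i - x k i‖ ^ 2 := by ring
        calc Real.sqrt (∑ i, ‖g i (x (k + 1) i) - g i (x k i)‖ ^ 2)
            ≤ Real.sqrt (∑ i, L ^ 2 * ‖x (k + 1) i - x k i‖ ^ 2) :=
              Real.sqrt_le_sqrt hsum
          _ = L * Real.sqrt (∑ i, ‖x (k + 1) i - x k i‖ ^ 2) := by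
              rw [← Finset.mul_sum, Real.sqrt_mul (sq_nonneg L), Real.sqrt_sq hL0]
      have step2 : Real.sqrt (∑ i, ‖x (k + 1) i - x k i‖ ^ 2) ≤ q (k + 1) + q k := by
        rw [hq (k + 1), hq k, hnorm, hnorm, hnorm]
        have h := norm_sub_le_norm_sub_add_norm_sub
          ((WithLp.equiv 2 (∀ _ : Fin n, EuclideanSpace ℝ (Fin p))).symm (x (k + 1)))
          ((WithLp.equiv 2 (∀ _ : Fin n, EuclideanSpace ℝ (Fin p))).symm xstar)
          ((WithLp.equiv 2 (∀ _ : Fin n, EuclideanSpace ℝ (Fin p))).symm (x k))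
        rwa [norm_sub_rev ((WithLp.equiv 2 (∀ _ : Fin n, EuclideanSpace ℝ (Fin p))).symm xstar)] at h
      calc z (k + 1) ≤ L * Real.sqrt (∑ i, ‖x (k + 1) i - x k i‖ ^ 2) := step1
        _ ≤ L * (q (k + 1) + q k) := mul_le_mul_of_nonneg_left step2 hL0
    set T := tnorm q l K with hT
    have hTq : ∀ k ∈ Finset.range (K + 1), q k / l ^ k ≤ T := fun k hk =>
      Finset.le_sup' (fun k => q k / l ^ k) hk
    have hT0 : 0 ≤ T := by
      have := hTq 0 (Finset.mem_range.mpr (Nat.succ_pos K))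
      simp only [pow_zero, div_one] at this
      exact le_trans (hq0 0) this
    apply Finset.sup'_le
    intro k hk
    cases k with
    | zero =>
      simp only [hz0, pow_zero, div_one]
      positivity
    | succ j =>
      have hjk : j ∈ Finset.range (K + 1) := by
        rw [Finset.mem_range] at hk ⊢; omega
      have h1 : q (j + 1) / l ^ (j + 1) ≤ T := hTq _ hk
      have h2 : q j / l ^ j ≤ T := hTq _ hjk
      have hlp : (0:ℝ) < l ^ (j + 1) := pow_pos hl0 _
      have hlj : (0:ℝ) < l ^ j := pow_pos hl0 _
      have e1 : z (j + 1) / l ^ (j + 1) ≤ L * (q (j + 1) + q j) / l ^ (j + 1) :=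
        (div_le_div_iff_of_pos_right hlp).mpr (hkey j)
      have e2 : L * (q (j + 1) + q j) / l ^ (j + 1)
          = L * (q (j + 1) / l ^ (j + 1)) + L * (1 / l) * (q j / l ^ j) := by
        rw [pow_succ]
        field_simp
      have e3 : L * (q (j + 1) / l ^ (j + 1)) ≤ L * T := mul_le_mul_of_nonneg_left h1 hL0
      have e4 : L * (1 / l) * (q j / l ^ j) ≤ L * (1 / l) * T :=
        mul_le_mul_of_nonneg_left h2 (by positivity)
      have e5 : L * T + L * (1 / l) * T = L * (1 + 1 / l) * T := by ring
      linarith
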